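/- Let F be a field of characteristic 2, let (A,σ) be a central simple F-algebra with involution of the first kind, let B be a simple F-subalgebra of A with center F such that σ(B) = B, and let C = C_A(B) be the centralizer of B in A. If 1 ∈ Alt(C,σ|_C) (i.e. σ|_C is of symplectic type), then Alt(A,σ) ∩ B ≠ Alt(B,σ|_B); indeed for every x ∈ Sym(B,σ|_B) \ Alt(B,σ|_B) one has x ∈ Alt(A,σ). -/

import Mathlib

open Module Finset

section AW
variable {F B : Type} [Field F] [Ring B] [Algebra F B]

/-- Artin–Whaples independence for central simple algebras. -/
theorem aw_main [IsSimpleRing B] [Algebra.IsCentral F B]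
    {ι : Type} [Fintype ι] {c : ι → B} (hc : LinearIndependent F c)
    (a : ι → B) (hrel : ∀ x : B, ∑ j, a j * x * c j = 0) : ∀ j, a j = 0 := by
  classical
  suffices H : ∀ (n : ℕ) (a : ι → B) (s : Finset ι), (∀ j ∉ s, a j = 0) → s.card ≤ n →
      (∀ x : B, ∑ j, a j * x * c j = 0) → ∀ j, a j = 0 by
    exact H (Finset.univ.card) a Finset.univ (fun j hj => absurd (Finset.mem_univ j) hj)
      le_rfl hrel
  intro n
  induction n with
  | zero =>
    intro a s hs hcard _ j
    rw [Nat.le_zero, Finset.card_eq_zero] at hcard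
    exact hs j (hcard ▸ Finset.notMem_empty j)
  | succ n ih =>
    intro a s hs hcard hrel
    by_contra hne
    push_neg at hne
    obtain ⟨j₀, hj₀⟩ := hne
    have hj₀s : j₀ ∈ s := by
      by_contra h; exact hj₀ (hs j₀ h)
    -- the two-sided ideal generated by a j₀
    set G : Set B := {z | ∃ u v : B, u * a j₀ * v = z} with hG
    set I : Submodule F B := Submodule.span F G with hI
    have hmull : ∀ x y : B, y ∈ I → x * y ∈ I := by
      intro x y hy
      induction hy using Submodule.span_induction with
      | mem z hz =>
        obtain ⟨u, v, rfl⟩ := hz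
        exact Submodule.subset_span ⟨x * u, v, by rw [mul_assoc x, mul_assoc x]⟩
      | zero => simpa using Submodule.zero_mem I
      | add p q _ _ hp hq => rw [mul_add]; exact Submodule.add_mem I hp hq
      | smul r p _ hp => rw [mul_smul_comm]; exact Submodule.smul_mem I r hp
    have hmulr : ∀ x y : B, y ∈ I → y * x ∈ I := by
      intro x y hy
      induction hy using Submodule.span_induction with
      | mem z hz =>
        obtain ⟨u, v, rfl⟩ := hz
        exact Submodule.subset_span ⟨u, v * x, by rw [← mul_assoc]⟩
      | zero => simpa using Submodule.zero_mem I
      | add p q _ _ hp hq => rw [add_mul]; exact Submodule.add_mem I hp hq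
      | smul r p _ hp => rw [smul_mul_assoc]; exact Submodule.smul_mem I r hp
    set J : TwoSidedIdeal B := TwoSidedIdeal.mk' (I : Set B) (Submodule.zero_mem I)
      (fun hx hy => Submodule.add_mem I hx hy) (fun hx => Submodule.neg_mem I hx)
      (fun {x y} hy => hmull x y hy) (fun {x y} hx => hmulr y x hx) with hJ
    have haj₀I : a j₀ ∈ I := Submodule.subset_span ⟨1, 1, by simp⟩
    have hJtop : J = ⊤ := by
      rcases eq_bot_or_eq_top J with h | h
      · exfalso
        have : a j₀ ∈ J := by
          rw [hJ, TwoSidedIdeal.mem_mk']; exact haj₀I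
        rw [h] at this
        rw [TwoSidedIdeal.mem_bot] at this
        exact hj₀ this
      · exact h
    have h1I : (1 : B) ∈ I := by
      have : (1 : B) ∈ J := hJtop ▸ TwoSidedIdeal.mem_top _
      rwa [hJ, TwoSidedIdeal.mem_mk'] at this
    rw [hI, Submodule.mem_span_set'] at h1I
    obtain ⟨m, f, g, hfg⟩ := h1I
    choose u v huv using fun k => (g k).2
    -- new coefficients
    set a' : ι → B := fun j => ∑ k, f k • (u k * a j * v k) with ha'
    have ha'j₀ : a' j₀ = 1 := by
      rw [ha']
      simp only
      rw [← hfg]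
      exact Finset.sum_congr rfl fun k _ => by rw [huv k]
    have ha'zero : ∀ j, a j = 0 → a' j = 0 := by
      intro j hj; simp [ha', hj]
    have hrel' : ∀ x : B, ∑ j, a' j * x * c j = 0 := by
      intro x
      have step : ∀ j, a' j * x * c j = ∑ k, f k • (u k * (a j * (v k * x) * c j)) := by
        intro j
        rw [ha']
        simp only
        rw [Finset.sum_mul, Finset.sum_mul]
        exact Finset.sum_congr rfl fun k _ => by
          rw [smul_mul_assoc, smul_mul_assoc]; congr 1; simp [mul_assoc]
      calc ∑ j, a' j * x * c j = ∑ j, ∑ k, f k • (u k * (a j * (v k * x) * c j)) :=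
            Finset.sum_congr rfl fun j _ => step j
        _ = ∑ k, ∑ j, f k • (u k * (a j * (v k * x) * c j)) := Finset.sum_comm
        _ = ∑ k, f k • (u k * (∑ j, a j * (v k * x) * c j)) := by
            refine Finset.sum_congr rfl fun k _ => ?_
            rw [Finset.mul_sum, Finset.smul_sum]
        _ = 0 := by
            refine Finset.sum_eq_zero fun k _ => ?_
            rw [hrel (v k * x)]
            simp
    -- commutator coefficients
    have hcomm : ∀ b j, b * a' j - a' j * b = 0 := by
      intro b j
      set w : ι → B := fun j => b * a' j - a' j * b with hw
      have hws : ∀ i ∉ s.erase j₀, w i = 0 := by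
        intro i hi
        rw [Finset.mem_erase] at hi
        push_neg at hi
        by_cases h : i = j₀
        · simp [hw, h, ha'j₀]
        · simp [hw, ha'zero i (hs i (hi h))]
      have hwcard : (s.erase j₀).card ≤ n := by
        have := Finset.card_erase_of_mem hj₀s
        omega
      have hwrel : ∀ x : B, ∑ i, w i * x * c i = 0 := by
        intro x
        have expand : ∀ i, w i * x * c i = b * (a' i * x * c i) - a' i * (b * x) * c i := by
          intro i; simp only [hw]
          rw [sub_mul, sub_mul]
          congr 1 <;> simp [mul_assoc]
        calc ∑ i, w i * x * c i
            = ∑ i, (b * (a' i * x * c i) - a' i * (b * x) * c i) :=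
              Finset.sum_congr rfl fun i _ => expand i
          _ = b * (∑ i, a' i * x * c i) - ∑ i, a' i * (b * x) * c i := by
              rw [Finset.sum_sub_distrib, Finset.mul_sum]
          _ = 0 := by rw [hrel' x, hrel' (b * x)]; simp
      exact ih w (s.erase j₀) hws hwcard hwrel j
    -- so each a' j is central
    have hcentral : ∀ j, ∃ r : F, a' j = algebraMap F B r := by
      intro j
      have : a' j ∈ Subalgebra.center F B := by
        rw [Subalgebra.mem_center_iff]
        intro b
        exact sub_eq_zero.mp (hcomm b j)
      have hbot : a' j ∈ (⊥ : Subalgebra F B) := Algebra.IsCentral.out this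
      rw [Algebra.mem_bot] at hbot
      obtain ⟨r, hr⟩ := hbot
      exact ⟨r, hr.symm⟩
    choose lam hlam using hcentral
    have : ∑ j, lam j • c j = 0 := by
      have h1 := hrel' 1
      calc ∑ j, lam j • c j = ∑ j, a' j * 1 * c j := by
            refine Finset.sum_congr rfl fun j _ => ?_
            rw [hlam j, mul_one, ← Algebra.smul_def]
        _ = 0 := h1
    have hlam0 := Fintype.linearIndependent_iff.mp hc lam this j₀
    rw [hlam j₀, hlam0, map_zero] at ha'j₀
    exact one_ne_zero ha'j₀.symm

end AW

section Main
set_option maxHeartbeats 1600000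
variable {F B : Type} [Field F] [Ring B] [Algebra F B]

/-- In characteristic 2, a finite-dimensional central simple algebra with an involution
of the first kind has a symmetric element that is not alternating. -/
theorem exists_sym_not_alt [FiniteDimensional F B] [IsSimpleRing B] [Algebra.IsCentral F B]
    (h2 : (2 : F) = 0)
    (τ : B →ₗ[F] B) (hanti : ∀ x y : B, τ (x * y) = τ y * τ x) (hinv : ∀ x : B, τ (τ x) = x) :
    ∃ x : B, τ x = x ∧ ¬ ∃ y : B, y - τ y = x := by
  classical
  by_contra hcon
  push_neg at hcon
  -- hcon : ∀ x, τ x = x → ∃ y, y - τ y = x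
  have hchar : ∀ z : B, z + z = 0 := by
    intro z
    rw [← two_smul F z, h2, zero_smul]
  have hτinj : Function.Injective τ := Function.LeftInverse.injective hinv
  set ε : B →ₗ[F] B := LinearMap.id - τ with hε
  have hεapply : ∀ x, ε x = x - τ x := fun x => rfl
  have hrange_le_ker : LinearMap.range ε ≤ LinearMap.ker ε := by
    rintro _ ⟨y, rfl⟩
    rw [LinearMap.mem_ker, hεapply, hεapply, map_sub, hinv]
    have : y - τ y - (τ y - y) = (y - τ y) + (y - τ y) := by abel
    rw [this, hchar]
  have hker_le_range : LinearMap.ker ε ≤ LinearMap.range ε := by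
    intro x hx
    rw [LinearMap.mem_ker, hεapply, sub_eq_zero] at hx
    obtain ⟨y, hy⟩ := hcon x hx.symm
    exact ⟨y, hy⟩
  have hkr : LinearMap.range ε = LinearMap.ker ε :=
    le_antisymm hrange_le_ker hker_le_range
  set d : ℕ := finrank F B with hd
  set a : ℕ := finrank F (LinearMap.ker ε) with ha
  have hdaa : d = a + a := by
    have := LinearMap.finrank_range_add_finrank_ker ε
    rw [hkr] at this
    omega
  -- complement U of ker ε
  obtain ⟨U, hU⟩ := Submodule.exists_isCompl (LinearMap.ker ε)
  have hfinU : finrank F U = a := by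
    have := Submodule.finrank_add_eq_of_isCompl hU
    omega
  -- the commutant of τ
  set Comm : Submodule F (B →ₗ[F] B) :=
    { carrier := {f | f ∘ₗ τ = τ ∘ₗ f}
      add_mem' := fun {f g} hf hg => by
        simp only [Set.mem_setOf_eq] at *
        rw [LinearMap.add_comp, LinearMap.comp_add, hf, hg]
      zero_mem' := by
        simp only [Set.mem_setOf_eq]
        rw [LinearMap.zero_comp, LinearMap.comp_zero]
      smul_mem' := fun r f hf => by
        simp only [Set.mem_setOf_eq] at *
        rw [LinearMap.smul_comp, LinearMap.comp_smul, hf] } with hComm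
  have hmemComm : ∀ f : B →ₗ[F] B, f ∈ Comm ↔ f ∘ₗ τ = τ ∘ₗ f := fun f => Iff.rfl
  -- f in the commutant commutes with ε
  have hcommε : ∀ f : B →ₗ[F] B, f ∈ Comm → ∀ x, f (ε x) = ε (f x) := by
    intro f hf x
    rw [hmemComm] at hf
    have : f (τ x) = τ (f x) := congrFun (congrArg DFunLike.coe hf) x
    rw [hεapply, hεapply, map_sub, this]
  -- restriction to U is injective on the commutant
  have hrestr_inj : ∀ f : B →ₗ[F] B, f ∈ Comm → (∀ u : U, f u = 0) → f = 0 := by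
    intro f hf hfU
    ext x
    have hdec : ((LinearMap.ker ε).projectionOnto U hU x : B) + (U.projectionOnto (LinearMap.ker ε) hU.symm x : B) = x := Submodule.projection_add_projection_eq_self hU x
    set k := (LinearMap.ker ε).projectionOnto U hU x
    set u := U.projectionOnto (LinearMap.ker ε) hU.symm x
    have hk : (k : B) ∈ LinearMap.range ε := by rw [hkr]; exact k.2
    obtain ⟨y, hy⟩ := hk
    -- y = ky + uy, ε y = ε uy
    have hdecy : ((LinearMap.ker ε).projectionOnto U hU y : B) + (U.projectionOnto (LinearMap.ker ε) hU.symm y : B) = y := Submodule.projection_add_projection_eq_self hU y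
    set ky := (LinearMap.ker ε).projectionOnto U hU y
    set uy := U.projectionOnto (LinearMap.ker ε) hU.symm y
    have hεy : ε y = ε (uy : B) := by
      rw [← hdecy, map_add]
      have : ε (ky : B) = 0 := ky.2
      rw [this, zero_add]
    have hfk : f (k : B) = 0 := by
      rw [← hy, hεy, hcommε f hf, hfU uy, map_zero]
    rw [← hdec, map_add, hfk, hfU u, add_zero, LinearMap.zero_apply]
  -- dimension bound : finrank Comm ≤ a * d
  have hCommle : finrank F Comm ≤ a * d := by
    have hmap : Function.Injective
        ((LinearMap.lcomp F B U.subtype).comp Comm.subtype) := by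
      intro f g hfg
      apply Subtype.ext
      have : ((f : B →ₗ[F] B) - g) = 0 := by
        apply hrestr_inj _ (Submodule.sub_mem Comm f.2 g.2)
        intro u
        have : (f : B →ₗ[F] B) ∘ₗ U.subtype = (g : B →ₗ[F] B) ∘ₗ U.subtype := hfg
        have := congrFun (congrArg DFunLike.coe this) u
        simp only [LinearMap.sub_apply, LinearMap.coe_comp, Function.comp_apply,
          Submodule.coe_subtype] at *
        rw [this, sub_self]
      exact sub_eq_zero.mp this
    have := LinearMap.finrank_le_finrank_of_injective hmap
    rwa [Module.finrank_linearMap, hfinU, ← hd] at this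
  -- the sandwich maps
  set e : Basis (Fin d) F B := finBasis F B with he
  set sand : Fin d × Fin d → (B →ₗ[F] B) := fun p =>
    (LinearMap.mulLeft F (e p.1)) ∘ₗ (LinearMap.mulRight F (τ (e p.2))) with hsand
  have hsandapply : ∀ p x, sand p x = e p.1 * (x * τ (e p.2)) := fun p x => rfl
  set L : (Sym2 (Fin d) → F) →ₗ[F] (B →ₗ[F] B) :=
    ∑ p : Fin d × Fin d, (LinearMap.proj (Sym2.mk p.1 p.2)).smulRight (sand p) with hL
  have hLapply : ∀ f, L f = ∑ p : Fin d × Fin d, f (Sym2.mk p.1 p.2) • sand p := by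
    intro f
    rw [hL]
    simp [LinearMap.sum_apply]
  have hLapply' : ∀ f x, L f x = ∑ p : Fin d × Fin d, f (Sym2.mk p.1 p.2) • (e p.1 * (x * τ (e p.2))) := by
    intro f x
    rw [hLapply]
    simp [hsandapply]
  -- L lands in the commutant
  have hLComm : ∀ f, L f ∈ Comm := by
    intro f
    rw [hmemComm]
    ext x
    simp only [LinearMap.coe_comp, Function.comp_apply]
    have h1 : ∀ p : Fin d × Fin d, τ (e p.1 * (x * τ (e p.2))) = e p.2 * (τ x * τ (e p.1)) :=
      fun p => by rw [← mul_assoc, hanti, hanti, hinv]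
    have hR : τ (L f x) = ∑ p : Fin d × Fin d, f (Sym2.mk p.1 p.2) • (e p.2 * (τ x * τ (e p.1))) := by
      rw [hLapply' f x, map_sum]
      exact Finset.sum_congr rfl fun p _ => by rw [map_smul, h1 p]
    have hswap : ∑ p : Fin d × Fin d, f (Sym2.mk p.1 p.2) • (e p.2 * (τ x * τ (e p.1)))
        = ∑ p : Fin d × Fin d, f (Sym2.mk p.1 p.2) • (e p.1 * (τ x * τ (e p.2))) := by
      apply Fintype.sum_equiv (Equiv.prodComm (Fin d) (Fin d))
      intro p
      simp only [Equiv.prodComm_apply, Prod.fst_swap, Prod.snd_swap]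
      congr 1
      exact congrArg f Sym2.eq_swap
    rw [hLapply' f (τ x), hR, hswap]
  -- L is injective
  have hLinj : Function.Injective L := by
    rw [injective_iff_map_eq_zero]
    intro f hf
    have hτe : LinearIndependent F (τ ∘ e) :=
      (e.linearIndependent).map' τ (LinearMap.ker_eq_bot.mpr hτinj)
    have hco : ∀ j : Fin d, ∑ i : Fin d, f (Sym2.mk i j) • e i = 0 := by
      apply aw_main hτe
      intro x
      have := congrFun (congrArg DFunLike.coe hf) x
      rw [hLapply' f x] at this
      simp only [LinearMap.zero_apply] at this
      rw [← this, Fintype.sum_prod_type_right]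
      refine Finset.sum_congr rfl fun j _ => ?_
      rw [Finset.sum_mul, Finset.sum_mul]
      refine Finset.sum_congr rfl fun i _ => ?_
      simp only [Function.comp_apply]
      rw [smul_mul_assoc, smul_mul_assoc, mul_assoc]
    have hcoef : ∀ i j : Fin d, f (Sym2.mk i j) = 0 := by
      intro i j
      exact Fintype.linearIndependent_iff.mp e.linearIndependent _ (hco j) i
    funext z
    induction z using Sym2.ind with
    | _ i j => exact hcoef i j
  -- dimension bound from below
  have hSymle : (d + 1).choose 2 ≤ finrank F Comm := by
    have hinj2 : Function.Injective (L.codRestrict Comm hLComm) := by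
      intro f g hfg
      apply hLinj
      have := congrArg (Submodule.subtype Comm) hfg
      simpa using this
    have := LinearMap.finrank_le_finrank_of_injective hinj2
    rwa [Module.finrank_pi, Sym2.card, Fintype.card_fin] at this
  -- final contradiction
  have hval : (d + 1).choose 2 = (a + a + 1) * a := by
    rw [Nat.choose_two_right, hdaa, Nat.add_sub_cancel,
      show (a + a + 1) * (a + a) = (a + a + 1) * a * 2 from by ring]
    exact Nat.mul_div_cancel _ (by norm_num)
  have hfinal : (a + a + 1) * a ≤ a * (a + a) := by
    rw [← hval]
    calc (d + 1).choose 2 ≤ finrank F Comm := hSymle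
      _ ≤ a * d := hCommle
      _ = a * (a + a) := by rw [hdaa]
  have ha0 : a = 0 := by nlinarith
  have hd0 : d = 0 := by omega
  have : Nontrivial B := inferInstance
  have : 0 < finrank F B := finrank_pos
  omega

end Main

theorem alt_inter_subalgebra_ne_alt_of_symplectic_centralizer
    (F : Type) [Field F] (hF : ringChar F = 2)
    (A : Type) [Ring A] [Algebra F A] [FiniteDimensional F A]
    [Algebra.IsCentral F A] [IsSimpleRing A]
    (σ : A →ₗ[F] A)
    (hanti : ∀ x y, σ (x * y) = σ y * σ x)
    (hinv : ∀ x, σ (σ x) = x)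
    (B : Subalgebra F A)
    (hBsimple : IsSimpleRing B)
    (hBcentral : Subalgebra.center F B = ⊥)
    (hσB : ∀ x, x ∈ B ↔ σ x ∈ B)
    (hsymp : ∃ c ∈ Subalgebra.centralizer F (B : Set A), c - σ c = 1) :
    (¬ ∀ x ∈ B, ((∃ y : A, y - σ y = x) ↔ (∃ y ∈ B, y - σ y = x))) ∧
    ∀ x ∈ B, σ x = x → (¬ ∃ y ∈ B, y - σ y = x) → ∃ y : A, y - σ y = x := by
  obtain ⟨c, hcC, hc1⟩ := hsymp
  have hσc : σ c = c - 1 := by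
    have : σ c = c - (c - σ c) := by abel
    rw [this, hc1]
  -- key construction: every symmetric element of B is alternating in A
  have key : ∀ x ∈ B, σ x = x → (c * x) - σ (c * x) = x := by
    intro x hx hsx
    have hcomm : x * c = c * x := (Subalgebra.mem_centralizer_iff F).mp hcC x hx
    rw [hanti, hsx, hσc, mul_sub, mul_one, hcomm, sub_sub_cancel]
  -- instances for the subalgebra
  have h2 : (2 : F) = 0 := by
    have : ((2 : ℕ) : F) = 0 := (ringChar.spec F 2).mpr (by rw [hF])
    exact_mod_cast this
  haveI : FiniteDimensional F B :=
    FiniteDimensional.of_injective (B.val.toLinearMap) Subtype.val_injective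
  haveI : IsSimpleRing B := hBsimple
  haveI : Algebra.IsCentral F B := ⟨hBcentral.le⟩
  -- the restricted involution
  set τ : ↥B →ₗ[F] ↥B :=
    { toFun := fun b => ⟨σ ↑b, (hσB (↑b : A)).mp b.2⟩
      map_add' := fun x y => Subtype.ext (by
        simp only [Subalgebra.coe_add, map_add])
      map_smul' := fun r x => Subtype.ext (by
        simp only [SetLike.val_smul, map_smul, RingHom.id_apply]) } with hτ
  have hτcoe : ∀ b : ↥B, (↑(τ b) : A) = σ ↑b := fun b => rfl
  have hτanti : ∀ x y : ↥B, τ (x * y) = τ y * τ x := by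
    intro x y
    apply Subtype.ext
    rw [hτcoe, MulMemClass.coe_mul, hanti, MulMemClass.coe_mul, hτcoe, hτcoe]
  have hτinv : ∀ x : ↥B, τ (τ x) = x := by
    intro x
    apply Subtype.ext
    rw [hτcoe, hτcoe, hinv]
  obtain ⟨x₀, hx₀sym, hx₀nalt⟩ := exists_sym_not_alt h2 τ hτanti hτinv
  have hx₀symA : σ (↑x₀ : A) = ↑x₀ := by
    rw [← hτcoe, hx₀sym]
  constructor
  · intro hall
    have hiff := hall (↑x₀ : A) x₀.2
    have hA : ∃ y : A, y - σ y = ↑x₀ := ⟨c * ↑x₀, key ↑x₀ x₀.2 hx₀symA⟩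
    obtain ⟨y, hyB, hy⟩ := hiff.mp hA
    apply hx₀nalt
    refine ⟨⟨y, hyB⟩, Subtype.ext ?_⟩
    rw [AddSubgroupClass.coe_sub, hτcoe]
    exact hy
  · intro x hx hsx _
    exact ⟨c * x, key x hx hsx⟩
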